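/- Let G be a finite d-regular simple graph with vertex set V(G) of size g and edge set E(G), where d ≥ 3. Let K = [0,1]^{E(G)} and W = {x ∈ ℝ^{E(G)} : Σ_{e ∋ v} x_e = 1 for every vertex v}. Then the function φ(x) = Σ_{e ∈ E(G)} ((1 − x_e) ln(1 − x_e) − x_e ln(x_e)) (with 0·ln 0 = 0) has a unique maximum on K ∩ W, attained at the point x⁰ = (1/d, …, 1/d), with maximum value φ(x⁰) = (g/2) ln((d−1)^{d−1}/d^{d−2}); moreover the Hessian of φ at x⁰ is D²φ(x⁰) = −(d(d−2)/(d−1)) · I. -/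

import Mathlib

open Real

noncomputable def gfun (t : ℝ) : ℝ := (1 - t) * Real.log (1 - t) - t * Real.log t

lemma gfun_eq : gfun = fun t => Real.negMulLog t - Real.negMulLog (1 - t) := by
  funext t; simp [gfun, Real.negMulLog]; ring

lemma continuous_gfun : Continuous gfun := by
  rw [gfun_eq]
  exact Real.continuous_negMulLog.sub
    (Real.continuous_negMulLog.comp (continuous_const.sub continuous_id))

lemma gfun_zero : gfun 0 = 0 := by simp [gfun]
lemma gfun_one : gfun 1 = 0 := by simp [gfun]

lemma hasDerivAt_gfun {t : ℝ} (h0 : t ≠ 0) (h1 : t ≠ 1) :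
    HasDerivAt gfun (-Real.log (1 - t) - Real.log t - 2) t := by
  have h1' : (1 : ℝ) - t ≠ 0 := sub_ne_zero.2 (Ne.symm h1)
  have ha : HasDerivAt (fun t : ℝ => 1 - t) (-1) t := (hasDerivAt_id t).const_sub 1
  have h₂ : HasDerivAt (fun t : ℝ => Real.negMulLog (1 - t))
      ((-Real.log (1 - t) - 1) * (-1)) t :=
    (Real.hasDerivAt_negMulLog h1').comp t ha
  have h₁ : HasDerivAt Real.negMulLog (-Real.log t - 1) t := Real.hasDerivAt_negMulLog h0
  rw [gfun_eq]
  refine (h₁.sub h₂).congr_deriv ?_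
  ring

lemma gfun_pos {d : ℕ} (hd : 3 ≤ d) : 0 < gfun (1 / (d : ℝ)) := by
  have hd3 : (3 : ℝ) ≤ (d : ℝ) := by exact_mod_cast hd
  set t : ℝ := 1 / (d : ℝ) with ht
  have ht0 : 0 < t := by positivity
  have ht3 : t ≤ 1 / 3 := by
    rw [ht]; apply div_le_div_of_nonneg_left (by norm_num) (by norm_num) hd3
  have ht1 : t < 1 := by linarith
  -- log t = - log d
  have hlogt : Real.log t = -Real.log d := by
    rw [ht, one_div, Real.log_inv]
  -- (1-t) log (1-t) ≥ -t
  have h1 : -t ≤ (1 - t) * Real.log (1 - t) := by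
    have hpos : 0 < 1 - t := by linarith
    have := Real.log_le_sub_one_of_pos (show (0:ℝ) < (1 - t)⁻¹ by positivity)
    rw [Real.log_inv] at this
    -- -log(1-t) ≤ (1-t)⁻¹ - 1 = t/(1-t)
    have h2 : -Real.log (1 - t) ≤ t / (1 - t) := by
      have : (1 - t)⁻¹ - 1 = t / (1 - t) := by field_simp; ring
      linarith [this ▸ ‹-Real.log (1-t) ≤ (1-t)⁻¹ - 1›]
    have := mul_le_mul_of_nonneg_left h2 hpos.le
    rw [mul_div_cancel₀ _ hpos.ne'] at this
    nlinarith
  have hlog3 : (1 : ℝ) < Real.log 3 := by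
    rw [show (1:ℝ) = Real.log (Real.exp 1) by simp]
    apply Real.log_lt_log (Real.exp_pos 1)
    linarith [Real.exp_one_lt_d9]
  have hlogd : Real.log 3 ≤ Real.log d := Real.log_le_log (by norm_num) hd3
  have : t * (Real.log d - 1) > 0 := by
    apply mul_pos ht0; linarith
  unfold gfun
  rw [hlogt]
  nlinarith

lemma gfun_smooth_aux {a b : ℝ} (ha : 0 ≤ a) (hab : a + b < 1) (hlt : a < b) :
    gfun a + gfun b < 2 * gfun ((a + b) / 2) := by
  set s : ℝ := a + b with hs
  set h : ℝ → ℝ := fun t => gfun t + gfun (s - t) with hh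
  have hs1 : s < 1 := hab
  have hb0 : 0 < b := lt_of_le_of_lt ha hlt
  have hs0 : 0 < s := by simp [hs]; linarith
  have haslt : a < s / 2 := by simp [hs]; linarith
  have hmono : StrictMonoOn h (Set.Icc a (s / 2)) := by
    apply strictMonoOn_of_deriv_pos (convex_Icc _ _)
    · apply Continuous.continuousOn
      exact continuous_gfun.add (continuous_gfun.comp (continuous_const.sub continuous_id))
    · intro t htmem
      rw [interior_Icc] at htmem
      obtain ⟨hta, hts⟩ := htmem
      have ht0 : 0 < t := lt_of_le_of_lt ha hta
      have ht1 : t < 1 := by nlinarith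
      have hst0 : 0 < s - t := by nlinarith
      have hst1 : s - t < 1 := by nlinarith
      have hd1 : HasDerivAt (fun t => gfun (s - t))
          ((-Real.log (1 - (s - t)) - Real.log (s - t) - 2) * (-1)) t :=
        (hasDerivAt_gfun hst0.ne' hst1.ne).comp t ((hasDerivAt_id t).const_sub s)
      have hD : HasDerivAt h
          ((-Real.log (1 - t) - Real.log t - 2) +
            (-Real.log (1 - (s - t)) - Real.log (s - t) - 2) * (-1)) t :=
        (hasDerivAt_gfun ht0.ne' ht1.ne).add hd1
      rw [hD.deriv]
      have key : t * (1 - t) < (s - t) * (1 - (s - t)) := by nlinarith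
      have hlog := Real.log_lt_log (mul_pos ht0 (by linarith)) key
      rw [Real.log_mul ht0.ne' (by linarith), Real.log_mul hst0.ne' (by linarith)] at hlog
      linarith
  have := hmono (Set.mem_Icc.2 ⟨le_refl a, haslt.le⟩)
    (Set.mem_Icc.2 ⟨haslt.le, le_refl _⟩) haslt
  simpa [hh, hs, show s - a = b by ring, show s - s / 2 = s / 2 by ring,
    show a + b - (a + b) / 2 = (a + b) / 2 by ring, two_mul] using this

lemma gfun_smooth {a b : ℝ} (ha : 0 ≤ a) (hb : 0 ≤ b) (hab : a + b < 1) (hne : a ≠ b) :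
    gfun a + gfun b < 2 * gfun ((a + b) / 2) := by
  rcases hne.lt_or_gt with h | h
  · exact gfun_smooth_aux ha hab h
  · have := gfun_smooth_aux hb (by linarith) h
    rw [add_comm b a] at this
    linarith


lemma lemA_max {ι : Type*} [Fintype ι] (d : ℕ) (hd : 3 ≤ d) (hcard : Fintype.card ι = d)
    {m : ι → ℝ}
    (hmX : m ∈ {q : ι → ℝ | (∀ i, 0 ≤ q i) ∧ ∑ i, q i = 1})
    (hmax : IsMaxOn (fun q : ι → ℝ => ∑ i, gfun (q i))
      {q : ι → ℝ | (∀ i, 0 ≤ q i) ∧ ∑ i, q i = 1} m) :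
    m = fun _ => 1 / (d : ℝ) := by
  classical
  obtain ⟨hm0, hms⟩ := hmX
  have hd0 : (0 : ℝ) < d := by
    have : (3:ℝ) ≤ d := by exact_mod_cast hd
    linarith
  have hpair : ∀ i j, i ≠ j → m i + m j ≤ 1 := by
    intro i j hij
    have := Finset.sum_le_sum_of_subset_of_nonneg
      (Finset.subset_univ ({i, j} : Finset ι)) (fun k _ _ => hm0 k)
    rw [Finset.sum_pair hij, hms] at this
    exact this
  have key : ∀ i j, i ≠ j → m i + m j < 1 → m i = m j := by
    intro i j hij hlt
    by_contra hne
    set t : ℝ := (m i + m j) / 2 with htdef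
    set m' : ι → ℝ := Function.update (Function.update m i t) j t with hm'
    have ht0 : 0 ≤ t := by
      have := hm0 i; have := hm0 j
      rw [htdef]; linarith
    have hm'i : m' i = t := by
      rw [hm', Function.update_of_ne hij, Function.update_self]
    have hm'j : m' j = t := by rw [hm', Function.update_self]
    have hm'k : ∀ k, k ≠ i → k ≠ j → m' k = m k := by
      intro k hki hkj
      rw [hm', Function.update_of_ne hkj, Function.update_of_ne hki]
    have hm'0 : ∀ k, 0 ≤ m' k := by
      intro k
      by_cases hki : k = i
      · subst hki; rw [hm'i]; exact ht0
      by_cases hkj : k = j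
      · subst hkj; rw [hm'j]; exact ht0
      · rw [hm'k k hki hkj]; exact hm0 k
    have hdiffsum : ∀ (f : ℝ → ℝ),
        ∑ k, (f (m' k) - f (m k)) = (f t - f (m i)) + (f t - f (m j)) := by
      intro f
      rw [← Finset.sum_subset (Finset.subset_univ ({i, j} : Finset ι))]
      · rw [Finset.sum_pair hij, hm'i, hm'j]
      · intro k _ hk
        simp only [Finset.mem_insert, Finset.mem_singleton] at hk
        push_neg at hk
        rw [hm'k k hk.1 hk.2, sub_self]
    have hsum' : ∑ k, m' k = 1 := by
      have h1 := hdiffsum id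
      simp only [id] at h1
      have h2 : ∑ k, (m' k - m k) = 0 := by
        rw [h1, htdef]; ring
      rw [Finset.sum_sub_distrib] at h2
      rw [hms] at h2
      linarith
    have hgt : ∑ k, gfun (m k) < ∑ k, gfun (m' k) := by
      have h1 := hdiffsum gfun
      have hs := gfun_smooth (hm0 i) (hm0 j) hlt hne
      have h2 : (0:ℝ) < ∑ k, (gfun (m' k) - gfun (m k)) := by
        rw [h1, htdef]; linarith
      rw [Finset.sum_sub_distrib] at h2
      linarith
    exact absurd (isMaxOn_iff.1 hmax m' ⟨hm'0, hsum'⟩) (not_le.2 hgt)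
  by_contra hne
  have hnotall : ∃ i j, m i ≠ m j := by
    by_contra hall
    push_neg at hall
    apply hne
    funext k
    have hconst : ∀ l, m l = m k := fun l => hall l k
    have hsum : ∑ l, m l = (d : ℝ) * m k := by
      rw [Finset.sum_congr rfl fun l _ => hconst l, Finset.sum_const, Finset.card_univ,
        hcard, nsmul_eq_mul]
    rw [hms] at hsum
    field_simp
    linarith
  obtain ⟨i, j, hij⟩ := hnotall
  have hijne : i ≠ j := fun h => hij (h ▸ rfl)
  have hsum1 : m i + m j = 1 := by
    rcases lt_or_eq_of_le (hpair i j hijne) with h | h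
    · exact absurd (key i j hijne h) hij
    · exact h
  have hzero : ∀ k, k ≠ i → k ≠ j → m k = 0 := by
    intro k hki hkj
    have hsd : ∑ l ∈ Finset.univ \ ({i, j} : Finset ι), m l = 0 := by
      rw [Finset.sum_sdiff_eq_sub (Finset.subset_univ _), hms, Finset.sum_pair hijne,
        hsum1, sub_self]
    exact (Finset.sum_eq_zero_iff_of_nonneg (fun l _ => hm0 l)).1 hsd k (by simp [hki, hkj])
  have hex : ∃ l, l ≠ i ∧ l ≠ j := by
    have hcard2 : ({i, j} : Finset ι).card ≤ 2 :=
      (Finset.card_insert_le _ _).trans (by simp)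
    have hpos : 0 < (Finset.univ \ ({i, j} : Finset ι)).card := by
      rw [Finset.card_sdiff_of_subset (Finset.subset_univ _), Finset.card_univ, hcard]
      omega
    obtain ⟨l, hl⟩ := Finset.card_pos.1 hpos
    simp only [Finset.mem_sdiff, Finset.mem_insert, Finset.mem_singleton] at hl
    push_neg at hl
    exact ⟨l, hl.2⟩
  obtain ⟨l, hli, hlj⟩ := hex
  have hml : m l = 0 := hzero l hli hlj
  have hone : ∀ k, k = i ∨ k = j → m k = 0 ∨ m k = 1 := by
    intro k hk
    by_cases h0 : m k = 0
    · exact Or.inl h0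
    right
    have hkl : k ≠ l := by
      rintro rfl
      rcases hk with rfl | rfl
      exacts [hli rfl, hlj rfl]
    have hne2 : m k ≠ m l := by rw [hml]; exact h0
    have hge : ¬ (m k + m l < 1) := fun h => hne2 (key k l hkl h)
    push_neg at hge
    rw [hml, add_zero] at hge
    have hub : m k ≤ 1 := by
      rcases hk with rfl | rfl
      · have := hm0 j; linarith
      · have := hm0 i; linarith
    exact le_antisymm hub hge
  have hall01 : ∀ k, m k = 0 ∨ m k = 1 := by
    intro k
    by_cases hki : k = i
    · exact hone k (Or.inl hki)
    by_cases hkj : k = j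
    · exact hone k (Or.inr hkj)
    · exact Or.inl (hzero k hki hkj)
  have hPhi0 : ∑ k, gfun (m k) = 0 := Finset.sum_eq_zero fun k _ => by
    rcases hall01 k with h | h <;> rw [h]
    · exact gfun_zero
    · exact gfun_one
  have hconstX : (fun _ : ι => 1 / (d:ℝ)) ∈
      {q : ι → ℝ | (∀ i, 0 ≤ q i) ∧ ∑ i, q i = 1} := by
    constructor
    · intro k; positivity
    · rw [Finset.sum_const, Finset.card_univ, hcard, nsmul_eq_mul]
      field_simp
  have hle := isMaxOn_iff.1 hmax _ hconstX
  rw [hPhi0] at hle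
  have hval : ∑ _k : ι, gfun (1 / (d:ℝ)) = (d:ℝ) * gfun (1 / (d:ℝ)) := by
    rw [Finset.sum_const, Finset.card_univ, hcard, nsmul_eq_mul]
  rw [hval] at hle
  nlinarith [gfun_pos hd]

lemma lemA {ι : Type*} [Fintype ι] (d : ℕ) (hd : 3 ≤ d) (hcard : Fintype.card ι = d)
    (p : ι → ℝ) (hp0 : ∀ i, 0 ≤ p i) (hps : ∑ i, p i = 1) :
    ∑ i, gfun (p i) ≤ (d : ℝ) * gfun (1 / (d:ℝ)) ∧
    (p ≠ (fun _ => 1 / (d:ℝ)) → ∑ i, gfun (p i) < (d : ℝ) * gfun (1 / (d:ℝ))) := by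
  classical
  set X : Set (ι → ℝ) := {q : ι → ℝ | (∀ i, 0 ≤ q i) ∧ ∑ i, q i = 1} with hX
  set Φ : (ι → ℝ) → ℝ := fun q => ∑ i, gfun (q i) with hΦ
  have hd0 : (0 : ℝ) < d := by
    have : (3:ℝ) ≤ d := by exact_mod_cast hd
    linarith
  have hconstX : (fun _ : ι => 1 / (d:ℝ)) ∈ X := by
    constructor
    · intro k; positivity
    · rw [Finset.sum_const, Finset.card_univ, hcard, nsmul_eq_mul]
      field_simp
  have hXsub : X ⊆ Set.univ.pi (fun _ : ι => Set.Icc (0:ℝ) 1) := by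
    rintro q ⟨hq0, hqs⟩ i _
    refine ⟨hq0 i, ?_⟩
    have := Finset.single_le_sum (fun k (_ : k ∈ Finset.univ) => hq0 k) (Finset.mem_univ i)
    rw [hqs] at this
    exact this
  have hXclosed : IsClosed X := by
    have h1 : IsClosed {q : ι → ℝ | ∀ i, 0 ≤ q i} := by
      have : {q : ι → ℝ | ∀ i, 0 ≤ q i} = ⋂ i, (fun q : ι → ℝ => q i) ⁻¹' Set.Ici 0 := by
        ext q; simp [Set.mem_iInter]
      rw [this]
      exact isClosed_iInter fun i => isClosed_Ici.preimage (continuous_apply i)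
    have h2 : IsClosed {q : ι → ℝ | ∑ i, q i = 1} :=
      isClosed_eq (by continuity) continuous_const
    have : X = {q : ι → ℝ | ∀ i, 0 ≤ q i} ∩ {q : ι → ℝ | ∑ i, q i = 1} := by
      ext q; simp [hX, Set.mem_setOf_eq]
    rw [this]
    exact h1.inter h2
  have hXcompact : IsCompact X :=
    IsCompact.of_isClosed_subset (isCompact_univ_pi fun _ => isCompact_Icc) hXclosed hXsub
  have hΦcont : Continuous Φ := by
    apply continuous_finset_sum
    intro i _
    exact continuous_gfun.comp (continuous_apply i)
  obtain ⟨m, hmX, hmax⟩ :=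
    hXcompact.exists_isMaxOn ⟨_, hconstX⟩ hΦcont.continuousOn
  have hmconst : m = fun _ => 1 / (d:ℝ) := lemA_max d hd hcard hmX hmax
  have hΦconst : Φ (fun _ : ι => 1 / (d:ℝ)) = (d:ℝ) * gfun (1 / (d:ℝ)) := by
    rw [hΦ]
    simp only
    rw [Finset.sum_const, Finset.card_univ, hcard, nsmul_eq_mul]
  have hle : Φ p ≤ (d:ℝ) * gfun (1 / (d:ℝ)) := by
    have := isMaxOn_iff.1 hmax p ⟨hp0, hps⟩
    rw [hmconst, hΦconst] at this
    exact this
  refine ⟨hle, fun hpne => ?_⟩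
  rcases lt_or_eq_of_le hle with h | h
  · exact h
  · exfalso
    apply hpne
    apply lemA_max d hd hcard (⟨hp0, hps⟩ : p ∈ X)
    intro q hq
    have := isMaxOn_iff.1 hmax q hq
    rw [hmconst, hΦconst] at this
    show Φ q ≤ Φ p
    rw [h]
    exact this

lemma card_filter_mem_sym2 {V : Type*} [Fintype V] [DecidableEq V] {z : Sym2 V}
    (hz : ¬ z.IsDiag) :
    (Finset.univ.filter (fun v => v ∈ z)).card = 2 := by
  induction z with
  | _ a b =>
    have hab : a ≠ b := by simpa using hz
    have : Finset.univ.filter (fun v => v ∈ (s(a, b) : Sym2 V)) = {a, b} := by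
      ext v; simp [Sym2.mem_iff]
    rw [this, Finset.card_pair hab]

lemma dgfun_eq (d : ℕ) (hd : 3 ≤ d) :
    (d:ℝ) * gfun (1 / (d:ℝ)) =
      Real.log (((d:ℝ) - 1) ^ (d - 1) / (d:ℝ) ^ (d - 2)) := by
  have hd0 : (0:ℝ) < d := by
    have : (3:ℝ) ≤ d := by exact_mod_cast hd
    linarith
  have hd1 : (0:ℝ) < (d:ℝ) - 1 := by
    have : (3:ℝ) ≤ d := by exact_mod_cast hd
    linarith
  have hc1 : ((d - 1 : ℕ) : ℝ) = (d:ℝ) - 1 := by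
    have : 1 ≤ d := by omega
    push_cast [Nat.cast_sub this]
    ring
  have hc2 : ((d - 2 : ℕ) : ℝ) = (d:ℝ) - 2 := by
    have : 2 ≤ d := by omega
    push_cast [Nat.cast_sub this]
    ring
  rw [Real.log_div (by positivity) (by positivity), Real.log_pow, Real.log_pow, hc1, hc2]
  have h1t : (1:ℝ) - 1 / d = ((d:ℝ) - 1) / d := by field_simp
  have hlog1 : Real.log ((1:ℝ) - 1 / d) = Real.log ((d:ℝ) - 1) - Real.log d := by
    rw [h1t, Real.log_div hd1.ne' hd0.ne']
  have hlog2 : Real.log ((1:ℝ) / d) = -Real.log d := by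
    rw [one_div, Real.log_inv]
  unfold gfun
  rw [hlog1, hlog2]
  field_simp
  ring

lemma sum_ite_subtype {α : Type*} [Fintype α] (P : α → Prop) [DecidablePred P]
    [Fintype {a : α // P a}] (f : α → ℝ) :
    (∑ a : α, if P a then f a else 0) = ∑ i : {a : α // P a}, f i.1 := by
  rw [← Finset.sum_filter]
  exact Finset.sum_subtype _ (fun a => by simp) f

lemma card_mem_sym2 {V : Type*} [Fintype V] [DecidableEq V] {z : Sym2 V}
    (hz : ¬ z.IsDiag) : Fintype.card {v : V // v ∈ z} = 2 := by
  induction z with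
  | _ a b =>
    have hab : a ≠ b := by simpa using hz
    rw [Fintype.card_subtype]
    have : Finset.univ.filter (fun v => v ∈ (s(a, b) : Sym2 V)) = {a, b} := by
      ext v; simp [Sym2.mem_iff]
    rw [this, Finset.card_pair hab]


open Classical in
/-- For a finite `d`-regular simple graph `G` (`d ≥ 3`) with `g` vertices,
the function `φ(x) = ∑_e ((1−x_e) ln(1−x_e) − x_e ln x_e)` on `ℝ^{E(G)}` has a unique
maximum on `K ∩ W` (where `K = [0,1]^{E(G)}` and `W` is defined by `∑_{e∋v} x_e = 1` for
all `v`), attained at `x⁰ = (1/d,…,1/d)`, with maximum value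
`(g/2)·ln((d−1)^{d−1}/d^{d−2})`; moreover the Hessian of `φ` at `x⁰` is
`−(d(d−2)/(d−1))·I` (as a bilinear form). -/
theorem stmt_5 {V : Type*} [Fintype V] [DecidableEq V] (G : SimpleGraph V)
    [DecidableRel G.Adj] (d g : ℕ) (hd : 3 ≤ d)
    (hreg : G.IsRegularOfDegree d) (hg : Fintype.card V = g)
    (φ : (G.edgeSet → ℝ) → ℝ)
    (hφ : ∀ x : G.edgeSet → ℝ,
      φ x = ∑ e : G.edgeSet, ((1 - x e) * Real.log (1 - x e) - x e * Real.log (x e))) :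
    (∀ x : G.edgeSet → ℝ, (∀ e, x e ∈ Set.Icc (0:ℝ) 1) →
        (∀ v : V, (∑ e : G.edgeSet, if v ∈ (e : Sym2 V) then x e else 0) = 1) →
        x ≠ (fun _ => 1 / (d:ℝ)) → φ x < φ (fun _ => 1 / (d:ℝ))) ∧
    φ (fun _ => 1 / (d:ℝ)) =
      (g : ℝ) / 2 * Real.log (((d:ℝ) - 1) ^ (d - 1) / (d:ℝ) ^ (d - 2)) ∧
    (∀ y z : G.edgeSet → ℝ,
      (fderiv ℝ (fderiv ℝ φ) (fun _ => 1 / (d:ℝ)) y) z =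
        -((d:ℝ) * ((d:ℝ) - 2) / ((d:ℝ) - 1)) * ∑ e : G.edgeSet, y e * z e) := by
  have hd0 : (0:ℝ) < d := by
    have : (3:ℝ) ≤ d := by exact_mod_cast hd
    linarith
  have hd3 : (3:ℝ) ≤ d := by exact_mod_cast hd
  have hφ' : ∀ x : G.edgeSet → ℝ, φ x = ∑ e : G.edgeSet, gfun (x e) := by
    intro x; rw [hφ x]; rfl
  have hφf : φ = fun x : G.edgeSet → ℝ => ∑ e : G.edgeSet, gfun (x e) :=
    funext hφ'
  -- edge count
  have hEcard : 2 * Fintype.card G.edgeSet = g * d := by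
    have h1 := G.sum_degrees_eq_twice_card_edges
    have h2 : ∑ v : V, G.degree v = g * d := by
      rw [Finset.sum_congr rfl fun v _ => hreg v, Finset.sum_const, Finset.card_univ, hg,
        smul_eq_mul]
    rw [h2, SimpleGraph.edgeFinset_card] at h1
    omega
  -- incidence cardinality
  have hcard_inc : ∀ v : V, Fintype.card {e : G.edgeSet // v ∈ (e : Sym2 V)} = d := by
    intro v
    have he : {e : G.edgeSet // v ∈ (e : Sym2 V)} ≃ G.incidenceSet v :=
      { toFun := fun e => ⟨e.1.1, e.1.2, e.2⟩
        invFun := fun e => ⟨⟨e.1, e.2.1⟩, e.2.2⟩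
        left_inv := fun e => rfl
        right_inv := fun e => rfl }
    rw [Fintype.card_congr he, SimpleGraph.card_incidenceSet_eq_degree, hreg v]
  have hC := (d:ℝ) * gfun (1 / (d:ℝ))
  refine ⟨?_, ?_, ?_⟩
  -- PART 1
  · intro x hx hsum hne
    have hvsum : ∀ v : V, ∑ i : {e : G.edgeSet // v ∈ (e : Sym2 V)}, x i.1 = 1 := by
      intro v
      rw [← sum_ite_subtype (fun e : G.edgeSet => v ∈ (e : Sym2 V)) x]
      exact hsum v
    have hA : ∀ v : V, ∑ i : {e : G.edgeSet // v ∈ (e : Sym2 V)}, gfun (x i.1)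
        ≤ (d:ℝ) * gfun (1/(d:ℝ)) := fun v =>
      (lemA d hd (hcard_inc v) (fun i => x i.1) (fun i => (hx i.1).1) (hvsum v)).1
    have hex : ∃ e₀ : G.edgeSet, x e₀ ≠ 1/(d:ℝ) := by
      by_contra h
      push_neg at h
      exact hne (funext h)
    obtain ⟨e₀, he₀⟩ := hex
    obtain ⟨v₀, hv₀⟩ : ∃ v, v ∈ (e₀ : Sym2 V) := ⟨(e₀ : Sym2 V).out.1, Sym2.out_fst_mem _⟩
    have hstrict : ∑ i : {e : G.edgeSet // v₀ ∈ (e : Sym2 V)}, gfun (x i.1)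
        < (d:ℝ) * gfun (1/(d:ℝ)) := by
      apply (lemA d hd (hcard_inc v₀) (fun i => x i.1) (fun i => (hx i.1).1) (hvsum v₀)).2
      intro hcc
      exact he₀ (congrFun hcc ⟨e₀, hv₀⟩)
    have hsumlt : ∑ v : V, (∑ e : G.edgeSet, if v ∈ (e : Sym2 V) then gfun (x e) else 0)
        < (g:ℝ) * ((d:ℝ) * gfun (1/(d:ℝ))) := by
      have hlt : ∑ v : V, (∑ e : G.edgeSet, if v ∈ (e : Sym2 V) then gfun (x e) else 0)
          < ∑ _v : V, (d:ℝ) * gfun (1/(d:ℝ)) := by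
        apply Finset.sum_lt_sum
        · intro v _
          rw [sum_ite_subtype (fun e : G.edgeSet => v ∈ (e : Sym2 V)) (fun e => gfun (x e))]
          exact hA v
        · refine ⟨v₀, Finset.mem_univ _, ?_⟩
          rw [sum_ite_subtype (fun e : G.edgeSet => v₀ ∈ (e : Sym2 V)) (fun e => gfun (x e))]
          exact hstrict
      rw [Finset.sum_const, Finset.card_univ, hg, nsmul_eq_mul] at hlt
      exact hlt
    -- double counting
    have hdc : ∑ v : V, (∑ e : G.edgeSet, if v ∈ (e : Sym2 V) then gfun (x e) else 0)
        = 2 * ∑ e : G.edgeSet, gfun (x e) := by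
      rw [Finset.sum_comm, Finset.mul_sum]
      apply Finset.sum_congr rfl
      intro e _
      rw [sum_ite_subtype (fun v : V => v ∈ (e : Sym2 V)) (fun _ => gfun (x e)),
        Finset.sum_const, Finset.card_univ, card_mem_sym2 (G.not_isDiag_of_mem_edgeSet e.2),
        nsmul_eq_mul]
      ring
    have hx0val : ∑ e : G.edgeSet, gfun ((1:ℝ)/(d:ℝ))
        = (Fintype.card G.edgeSet : ℝ) * gfun (1/(d:ℝ)) := by
      rw [Finset.sum_const, Finset.card_univ, nsmul_eq_mul]
    have hcast : (2:ℝ) * (Fintype.card G.edgeSet : ℝ) = (g:ℝ) * (d:ℝ) := by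
      exact_mod_cast hEcard
    rw [hφ' x, hφ' (fun _ => 1/(d:ℝ))]
    have hx0sum : ∑ e : G.edgeSet, gfun ((fun _ : G.edgeSet => 1/(d:ℝ)) e)
        = (Fintype.card G.edgeSet : ℝ) * gfun (1/(d:ℝ)) := hx0val
    rw [hx0sum]
    nlinarith [hsumlt, hdc, hcast, gfun_pos hd]
  -- PART 2
  · rw [hφ' (fun _ => 1/(d:ℝ))]
    have hx0sum : ∑ e : G.edgeSet, gfun ((fun _ : G.edgeSet => 1/(d:ℝ)) e)
        = (Fintype.card G.edgeSet : ℝ) * gfun (1/(d:ℝ)) := by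
      rw [Finset.sum_const, Finset.card_univ, nsmul_eq_mul]
    rw [hx0sum, ← dgfun_eq d hd]
    have hcast : (2:ℝ) * (Fintype.card G.edgeSet : ℝ) = (g:ℝ) * (d:ℝ) := by
      exact_mod_cast hEcard
    linear_combination (gfun (1/(d:ℝ)) / 2) * hcast
  -- PART 3
  · intro y z
    rw [hφf]
    have h0lt : (0:ℝ) < 1/(d:ℝ) := by positivity
    have h1lt : (1:ℝ)/(d:ℝ) < 1 := by
      rw [div_lt_one hd0]; linarith
    set x0 : G.edgeSet → ℝ := fun _ => 1 / (d:ℝ) with hx0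
    set U : Set (G.edgeSet → ℝ) := {x | ∀ e, x e ∈ Set.Ioo (0:ℝ) 1} with hU
    have hUopen : IsOpen U := by
      have : U = ⋂ e, (fun x : G.edgeSet → ℝ => x e) ⁻¹' Set.Ioo (0:ℝ) 1 := by
        ext q; simp [hU, Set.mem_iInter]
      rw [this]
      exact isOpen_iInter_of_finite fun e => isOpen_Ioo.preimage (continuous_apply e)
    have hx0U : x0 ∈ U := fun e => ⟨h0lt, h1lt⟩
    set D1 : (G.edgeSet → ℝ) → ((G.edgeSet → ℝ) →L[ℝ] ℝ) :=
      fun x => ∑ e : G.edgeSet, (-Real.log (1 - x e) - Real.log (x e) - 2) •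
        (ContinuousLinearMap.proj e : (G.edgeSet → ℝ) →L[ℝ] ℝ) with hD1def
    have hD1 : ∀ x ∈ U, HasFDerivAt
        (fun x : G.edgeSet → ℝ => ∑ e : G.edgeSet, gfun (x e)) (D1 x) x := by
      intro x hxU
      apply HasFDerivAt.fun_sum
      intro e _
      exact (hasDerivAt_gfun (hxU e).1.ne' (hxU e).2.ne).comp_hasFDerivAt x
        (hasFDerivAt_apply (𝕜 := ℝ) e x)
    have hev : fderiv ℝ (fun x : G.edgeSet → ℝ => ∑ e : G.edgeSet, gfun (x e))
        =ᶠ[nhds x0] D1 := by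
      filter_upwards [hUopen.mem_nhds hx0U] with x hxU
      exact (hD1 x hxU).fderiv
    have h2 : fderiv ℝ (fderiv ℝ (fun x : G.edgeSet → ℝ => ∑ e : G.edgeSet, gfun (x e))) x0
        = fderiv ℝ D1 x0 := hev.fderiv_eq
    set c : ℝ := (1 - 1/(d:ℝ))⁻¹ - ((1:ℝ)/(d:ℝ))⁻¹ with hc
    have hgd : HasDerivAt (fun t : ℝ => -Real.log (1 - t) - Real.log t - 2) c ((1:ℝ)/(d:ℝ)) := by
      have ha : HasDerivAt (fun t : ℝ => 1 - t) (-1) ((1:ℝ)/(d:ℝ)) :=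
        (hasDerivAt_id _).const_sub 1
      have hb : HasDerivAt (fun t : ℝ => Real.log (1 - t)) ((1 - 1/(d:ℝ))⁻¹ * (-1))
          ((1:ℝ)/(d:ℝ)) :=
        (Real.hasDerivAt_log (by intro h; nlinarith [h1lt] : (1:ℝ) - 1/(d:ℝ) ≠ 0)).comp _ ha
      have hcc : HasDerivAt Real.log (((1:ℝ)/(d:ℝ))⁻¹) ((1:ℝ)/(d:ℝ)) :=
        Real.hasDerivAt_log h0lt.ne'
      have hfin := (hb.neg.sub hcc).sub_const 2
      refine hfin.congr_deriv ?_
      rw [hc]; ring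
    set D2 : (G.edgeSet → ℝ) →L[ℝ] ((G.edgeSet → ℝ) →L[ℝ] ℝ) :=
      ∑ e : G.edgeSet, (c • (ContinuousLinearMap.proj e : (G.edgeSet → ℝ) →L[ℝ] ℝ)).smulRight
        (ContinuousLinearMap.proj e) with hD2def
    have hD2 : HasFDerivAt D1 D2 x0 := by
      apply HasFDerivAt.fun_sum
      intro e _
      have h1 : HasFDerivAt (fun x : G.edgeSet → ℝ => -Real.log (1 - x e) - Real.log (x e) - 2)
          (c • (ContinuousLinearMap.proj e : (G.edgeSet → ℝ) →L[ℝ] ℝ)) x0 :=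
        by have := hgd.comp_hasFDerivAt x0 (hasFDerivAt_apply (𝕜 := ℝ) e x0); exact this
      exact h1.smul_const (ContinuousLinearMap.proj e : (G.edgeSet → ℝ) →L[ℝ] ℝ)
    rw [h2, hD2.fderiv, hD2def]
    simp only [ContinuousLinearMap.sum_apply, ContinuousLinearMap.smulRight_apply,
      ContinuousLinearMap.smul_apply, ContinuousLinearMap.proj_apply, smul_eq_mul]
    have hcval : c = -((d:ℝ) * ((d:ℝ) - 2) / ((d:ℝ) - 1)) := by
      rw [hc]
      have h1 : (d:ℝ) - 1 ≠ 0 := by linarith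
      have h2 : (d:ℝ) ≠ 0 := hd0.ne'
      field_simp
      ring
    rw [hcval, Finset.mul_sum]
    exact Finset.sum_congr rfl fun e _ => by ring
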